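/- Variance comparison of the reference baseline versus the group-average baseline (Theorem 3, variance part): let G ≥ 2, let μ be any square-integrable real random variable, and let δ, ε_1, …, ε_G be mutually independent square-integrable real random variables with mean 0, Var(δ) = σ_δ², and Var(ε_j) = σ_w² for every j. Set R_j = μ + ε_j, R_ref = μ + δ, and μ̂_{−i} = (1/(G−1))·∑_{j≠i} R_j. Then for every i ∈ {1,…,G}: Var(R_i − R_ref) = σ_w² + σ_δ², Var(R_i − μ̂_{−i}) = σ_w² · G/(G−1), and consequently Var(R_i − R_ref) < Var(R_i − μ̂_{−i}) if and only if σ_δ² < σ_w²/(G−1). -/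

import Mathlib

open MeasureTheory ProbabilityTheory

/-- The variance of a real random variable `Z` with respect to `P`:
`Var(Z) := E[Z²] − (E[Z])²`. -/
noncomputable def var {Ω : Type*} [MeasurableSpace Ω] (P : Measure Ω) (Z : Ω → ℝ) : ℝ :=
  (∫ ω, (Z ω) ^ 2 ∂P) - (∫ ω, Z ω ∂P) ^ 2

/-- **Variance comparison of the reference baseline versus the group-average baseline
(Theorem 3, variance part).**
Let `G ≥ 2`, let `μ` be a square-integrable query-level reward, and let
`δ, ε 1, …, ε G` be mutually independent square-integrable noises with mean `0`,
`Var(δ) = σδ²` and `Var(ε j) = σw²`. Setting `R j = μ + ε j`, `Rref = μ + δ` and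
`μ̂_{-i} = (1/(G-1)) * ∑_{j ≠ i} R j`, for every `i` we have
`Var(R i - Rref) = σw² + σδ²`, `Var(R i - μ̂_{-i}) = σw² * G / (G-1)`, and consequently
`Var(R i - Rref) < Var(R i - μ̂_{-i})` if and only if `σδ² < σw² / (G-1)`. -/
theorem var_reference_vs_group_baseline {Ω : Type*} [MeasurableSpace Ω] (P : Measure Ω)
    [IsProbabilityMeasure P] (G : ℕ) (hG : 2 ≤ G)
    (μ : Ω → ℝ) (hμm : Measurable μ) (hμ2 : Integrable (fun ω => (μ ω) ^ 2) P)
    (δ : Ω → ℝ) (hδm : Measurable δ)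
    (ε : Fin G → Ω → ℝ) (hεm : ∀ j, Measurable (ε j))
    (hindep : iIndepFun
      (fun o : Option (Fin G) => Option.elim o δ ε) P)
    (hδ2 : Integrable (fun ω => (δ ω) ^ 2) P)
    (hε2 : ∀ j, Integrable (fun ω => (ε j ω) ^ 2) P)
    (hδmean : ∫ ω, δ ω ∂P = 0) (hεmean : ∀ j, ∫ ω, ε j ω ∂P = 0)
    (σδ2 σw2 : ℝ) (hδvar : var P δ = σδ2) (hεvar : ∀ j, var P (ε j) = σw2) :
    ∀ i : Fin G,
      var P (fun ω => (μ ω + ε i ω) - (μ ω + δ ω)) = σw2 + σδ2 ∧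
      var P (fun ω =>
          (μ ω + ε i ω) - (1 / ((G : ℝ) - 1)) * ∑ j ∈ Finset.univ.erase i, (μ ω + ε j ω))
        = σw2 * G / ((G : ℝ) - 1) ∧
      (var P (fun ω => (μ ω + ε i ω) - (μ ω + δ ω)) <
          var P (fun ω =>
            (μ ω + ε i ω) - (1 / ((G : ℝ) - 1)) * ∑ j ∈ Finset.univ.erase i, (μ ω + ε j ω))
        ↔ σδ2 < σw2 / ((G : ℝ) - 1)) := by
  classical
  intro i
  have hG1 : (1:ℝ) ≤ (G:ℝ) - 1 := by
    have : (2:ℝ) ≤ (G:ℝ) := by exact_mod_cast hG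
    linarith
  have hGne : (G:ℝ) - 1 ≠ 0 := by linarith
  -- Memℒp facts
  have hδℒ : MemLp δ 2 P := (memLp_two_iff_integrable_sq hδm.aestronglyMeasurable).2 hδ2
  have hεℒ : ∀ j, MemLp (ε j) 2 P := fun j =>
    (memLp_two_iff_integrable_sq (hεm j).aestronglyMeasurable).2 (hε2 j)
  have hvar_eq : ∀ Z : Ω → ℝ, MemLp Z 2 P → var P Z = variance Z P := by
    intro Z hZ
    rw [variance_eq_sub hZ]
    rfl
  have hεvar' : ∀ j, variance (ε j) P = σw2 := fun j => by
    rw [← hvar_eq _ (hεℒ j)]; exact hεvar j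
  have hδvar' : variance δ P = σδ2 := by rw [← hvar_eq _ hδℒ]; exact hδvar
  -- the erase set
  have hcard : ((Finset.univ.erase i).card : ℝ) = (G:ℝ) - 1 := by
    rw [Finset.card_erase_of_mem (Finset.mem_univ i), Finset.card_univ, Fintype.card_fin]
    have h1G : 1 ≤ G := le_trans (by norm_num) hG
    push_cast [Nat.cast_sub h1G]
    ring
  set c : ℝ := 1 / ((G:ℝ) - 1) with hc
  set S : Ω → ℝ := ∑ j ∈ Finset.univ.erase i, ε j with hS
  have hSapp : ∀ ω, S ω = ∑ j ∈ Finset.univ.erase i, ε j ω := fun ω => by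
    simp [hS]
  have hSℒ : MemLp S 2 P := memLp_finsetSum' _ (fun j _ => hεℒ j)
  -- independence facts
  have hiδ : IndepFun (ε i) δ P := by
    have := hindep.indepFun (i := some i) (j := none) (by simp)
    exact this
  have hiS : IndepFun (ε i) S P := by
    have hmeas : ∀ o : Option (Fin G),
        Measurable ((fun o : Option (Fin G) => Option.elim o δ ε) o) := by
      rintro (_ | j)
      · exact hδm
      · exact hεm j
    have hnot : (some i) ∉ (Finset.univ.erase i).map
        ⟨some, Option.some_injective _⟩ := by
      simp
    have h := hindep.indepFun_finsetSum_of_notMem hmeas hnot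
    rw [Finset.sum_map] at h
    exact h.symm
  -- First variance
  have h1 : var P (fun ω => (μ ω + ε i ω) - (μ ω + δ ω)) = σw2 + σδ2 := by
    have he : (fun ω => (μ ω + ε i ω) - (μ ω + δ ω)) = ε i + (-δ) := by
      funext ω; simp; ring
    have hnegδ : variance (-δ) P = variance δ P := by
      rw [show (-δ : Ω → ℝ) = (-1:ℝ) • δ from funext fun ω => by simp, variance_smul]
      norm_num
    rw [he, hvar_eq _ ((hεℒ i).add hδℒ.neg),
      (hiδ.neg_right).variance_add (hεℒ i) hδℒ.neg, hnegδ, hεvar' i, hδvar']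
  -- Second variance
  have h2 : var P (fun ω =>
      (μ ω + ε i ω) - (1 / ((G : ℝ) - 1)) * ∑ j ∈ Finset.univ.erase i, (μ ω + ε j ω))
      = σw2 * G / ((G : ℝ) - 1) := by
    have he : (fun ω =>
        (μ ω + ε i ω) - (1 / ((G : ℝ) - 1)) * ∑ j ∈ Finset.univ.erase i, (μ ω + ε j ω))
        = ε i + (-c) • S := by
      funext ω
      have hsum : ∑ j ∈ Finset.univ.erase i, (μ ω + ε j ω)
          = ((Finset.univ.erase i).card : ℝ) * μ ω + S ω := by
        rw [Finset.sum_add_distrib, hSapp]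
        simp [mul_comm]
      simp only [Pi.add_apply, Pi.smul_apply, smul_eq_mul, hsum, hcard, ← hc]
      have hc1 : c * ((G:ℝ) - 1) = 1 := by rw [hc]; field_simp
      linear_combination (-μ ω) * hc1
    have hSvar : variance S P = ((G:ℝ) - 1) * σw2 := by
      rw [hS, IndepFun.variance_sum (fun j _ => hεℒ j)]
      · rw [← hcard]
        simp [hεvar']
      · intro j hj k hk hjk
        have := hindep.indepFun (i := some j) (j := some k) (by simpa using hjk)
        exact this
    have hind' : IndepFun (ε i) ((-c) • S) P := by
      have : ((-c) • S) = (fun x : ℝ => (-c) * x) ∘ S := by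
        funext ω; simp
      rw [this]
      exact hiS.comp measurable_id (measurable_const_mul _)
    rw [he, hvar_eq _ ((hεℒ i).add (hSℒ.const_smul _)),
      hind'.variance_add (hεℒ i) (hSℒ.const_smul _), variance_smul, hεvar' i, hSvar, hc]
    field_simp
    ring
  refine ⟨h1, h2, ?_⟩
  rw [h1, h2]
  have key : σw2 * G / ((G:ℝ) - 1) = σw2 + σw2 / ((G:ℝ) - 1) := by
    field_simp
    ring
  rw [key]
  constructor <;> intro h <;> linarith
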